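/- Let φ, Ψ ∈ H^s(ℝ^d) with ‖φ‖_{L²}=‖Ψ‖_{L²}=1, set p = |φ⟩⟨φ|, q = 1-p, S = (1-Δ)^s, and a = ‖qΨ‖². Then for any θ ∈ [0,1), ⟨Ψ, S^θ Ψ⟩ - ⟨φ, S^θ φ⟩ ≤ (‖S^{1/2}Ψ‖ + ‖S^{1/2}φ‖) · max(1, (‖S^{1/2}Ψ‖+‖S^{1/2}φ‖)^{2θ-1}) · a^{min(1/2, 1-θ)}. -/

import Mathlib

open MeasureTheory
open scoped ENNReal

set_option maxHeartbeats 1000000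

section Helpers

variable {α : Type*} [MeasurableSpace α] {μ : Measure α}

lemma conj22 : Real.HolderConjugate 2 2 := Real.HolderConjugate.two_two

lemma my_int_mul {f g : α → ℝ} (hf : MemLp f 2 μ) (hg : MemLp g 2 μ) :
    Integrable (fun x => f x * g x) μ := by
  refine (hf.integrable_sq.add hg.integrable_sq).mono' (hf.1.mul hg.1) ?_
  filter_upwards with x
  simp only [Real.norm_eq_abs, abs_mul, Pi.add_apply]
  nlinarith [sq_nonneg (|f x| - |g x|), sq_abs (f x), sq_abs (g x)]

lemma my_cauchy {f g : α → ℝ} (hf : MemLp f 2 μ) (hg : MemLp g 2 μ)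
    (hf0 : ∀ x, 0 ≤ f x) (hg0 : ∀ x, 0 ≤ g x) :
    ∫ x, f x * g x ∂μ ≤ Real.sqrt (∫ x, f x ^ 2 ∂μ) * Real.sqrt (∫ x, g x ^ 2 ∂μ) := by
  have h2 : ENNReal.ofReal (2:ℝ) = 2 := by norm_num
  have := integral_mul_le_Lp_mul_Lq_of_nonneg (μ := μ) conj22
    (Filter.Eventually.of_forall hf0) (Filter.Eventually.of_forall hg0)
    (h2 ▸ hf) (h2 ▸ hg)
  calc ∫ x, f x * g x ∂μ
      ≤ (∫ x, f x ^ (2:ℝ) ∂μ) ^ (1/(2:ℝ)) * (∫ x, g x ^ (2:ℝ) ∂μ) ^ (1/(2:ℝ)) := this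
    _ = _ := by
      simp_rw [Real.rpow_two]
      rw [← Real.sqrt_eq_rpow, ← Real.sqrt_eq_rpow]

lemma toReal_eLpNorm_two {E : Type*} [NormedAddCommGroup E] {f : α → E} (hf : MemLp f 2 μ) :
    (eLpNorm f 2 μ).toReal = Real.sqrt (∫ x, ‖f x‖ ^ 2 ∂μ) := by
  rw [hf.eLpNorm_eq_integral_rpow_norm two_ne_zero ENNReal.ofNat_ne_top,
    ENNReal.toReal_ofReal (by positivity), Real.sqrt_eq_rpow]
  norm_num [Real.rpow_two]

lemma sqrt_integral_sq_eq {f : α → ℝ} (hf : MemLp f 2 μ) (hf0 : ∀ x, 0 ≤ f x) :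
    Real.sqrt (∫ x, f x ^ 2 ∂μ) = (eLpNorm f 2 μ).toReal := by
  have hi : ∫ x, ‖f x‖ ^ ((2:ℝ≥0∞)).toReal ∂μ = ∫ x, f x ^ 2 ∂μ := by
    refine integral_congr_ae (Filter.Eventually.of_forall fun x => ?_)
    simp only [ENNReal.toReal_ofNat, Real.rpow_two]
    rw [Real.norm_of_nonneg (hf0 x)]
  rw [hf.eLpNorm_eq_integral_rpow_norm two_ne_zero ENNReal.ofNat_ne_top, hi,
    ENNReal.toReal_ofReal (by positivity), ENNReal.toReal_ofNat,
    Real.sqrt_eq_rpow, one_div]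

lemma my_minkowski {f g : α → ℝ} (hf : MemLp f 2 μ) (hg : MemLp g 2 μ)
    (hf0 : ∀ x, 0 ≤ f x) (hg0 : ∀ x, 0 ≤ g x) :
    Real.sqrt (∫ x, (f x + g x) ^ 2 ∂μ)
      ≤ Real.sqrt (∫ x, f x ^ 2 ∂μ) + Real.sqrt (∫ x, g x ^ 2 ∂μ) := by
  have hfg : MemLp (f + g) 2 μ := hf.add hg
  have h1 : Real.sqrt (∫ x, (f x + g x) ^ 2 ∂μ) = (eLpNorm (f + g) 2 μ).toReal := by
    rw [← sqrt_integral_sq_eq hfg (fun x => add_nonneg (hf0 x) (hg0 x))]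
    simp [Pi.add_apply]
  rw [h1, sqrt_integral_sq_eq hf hf0, sqrt_integral_sq_eq hg hg0,
    ← ENNReal.toReal_add hf.2.ne hg.2.ne]
  exact ENNReal.toReal_mono (ENNReal.add_ne_top.2 ⟨hf.2.ne, hg.2.ne⟩)
    (eLpNorm_add_le hf.1 hg.1 one_le_two)

lemma my_interp {w u : α → ℝ} (hw : ∀ x, 1 ≤ w x) (hu : ∀ x, 0 ≤ u x)
    (hwm : AEStronglyMeasurable w μ) (hum : AEStronglyMeasurable u μ)
    (hu_int : Integrable u μ) (hwu_int : Integrable (fun x => w x * u x) μ)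
    {t : ℝ} (ht0 : 0 < t) (ht1 : t < 1) :
    ∫ x, (w x) ^ t * u x ∂μ
      ≤ (∫ x, w x * u x ∂μ) ^ t * (∫ x, u x ∂μ) ^ (1 - t) := by
  have ht1' : 0 < 1 - t := by linarith
  have hwu0 : ∀ x, 0 ≤ w x * u x := fun x => mul_nonneg (zero_le_one.trans (hw x)) (hu x)
  have hq0 : ENNReal.ofReal t ≠ 0 := by
    rw [Ne, ENNReal.ofReal_eq_zero]; exact not_le.2 ht0
  have hq0' : ENNReal.ofReal (1-t) ≠ 0 := by
    rw [Ne, ENNReal.ofReal_eq_zero]; exact not_le.2 ht1'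
  have hf : MemLp (fun x => (w x * u x) ^ t) (ENNReal.ofReal (1/t)) μ := by
    have h := (memLp_norm_rpow_iff (q := ENNReal.ofReal t) (p := 1)
      (hwm.mul hum) hq0 ENNReal.ofReal_ne_top).2 (memLp_one_iff_integrable.2 hwu_int)
    have e1 : (1 : ℝ≥0∞) / ENNReal.ofReal t = ENNReal.ofReal (1/t) := by
      rw [one_div, one_div, ← ENNReal.ofReal_inv_of_pos ht0]
    have e2 : (fun x => ‖(w * u) x‖ ^ (ENNReal.ofReal t).toReal) = fun x => (w x * u x) ^ t := by
      funext x
      rw [Pi.mul_apply, ENNReal.toReal_ofReal ht0.le, Real.norm_of_nonneg (hwu0 x)]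
    rwa [e1, e2] at h
  have hg : MemLp (fun x => (u x) ^ (1-t)) (ENNReal.ofReal (1/(1-t))) μ := by
    have h := (memLp_norm_rpow_iff (q := ENNReal.ofReal (1-t)) (p := 1)
      hum hq0' ENNReal.ofReal_ne_top).2 (memLp_one_iff_integrable.2 hu_int)
    have e1 : (1 : ℝ≥0∞) / ENNReal.ofReal (1-t) = ENNReal.ofReal (1/(1-t)) := by
      rw [one_div, one_div, ← ENNReal.ofReal_inv_of_pos ht1']
    have e2 : (fun x => ‖u x‖ ^ (ENNReal.ofReal (1-t)).toReal) = fun x => (u x) ^ (1-t) := by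
      funext x; rw [ENNReal.toReal_ofReal ht1'.le, Real.norm_of_nonneg (hu x)]
    rwa [e1, e2] at h
  have hpq : Real.HolderConjugate (1/t) (1/(1-t)) :=
    Real.holderConjugate_one_div ht0 ht1' (by ring)
  have H := integral_mul_le_Lp_mul_Lq_of_nonneg hpq
    (Filter.Eventually.of_forall fun x => Real.rpow_nonneg (hwu0 x) t)
    (Filter.Eventually.of_forall fun x => Real.rpow_nonneg (hu x) (1-t)) hf hg
  have eL : ∫ x, (w x * u x) ^ t * (u x) ^ (1-t) ∂μ = ∫ x, (w x) ^ t * u x ∂μ := by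
    refine integral_congr_ae (Filter.Eventually.of_forall fun x => ?_)
    show (w x * u x) ^ t * u x ^ (1 - t) = w x ^ t * u x
    rw [Real.mul_rpow (zero_le_one.trans (hw x)) (hu x), mul_assoc,
      ← Real.rpow_add' (hu x) (by norm_num)]
    norm_num
  have e3 : ∫ x, ((w x * u x) ^ t) ^ (1/t) ∂μ = ∫ x, w x * u x ∂μ := by
    refine integral_congr_ae (Filter.Eventually.of_forall fun x => ?_)
    show ((w x * u x) ^ t) ^ (1/t) = w x * u x
    rw [← Real.rpow_mul (hwu0 x), mul_one_div_cancel ht0.ne', Real.rpow_one]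
  have e4 : ∫ x, ((u x) ^ (1-t)) ^ (1/(1-t)) ∂μ = ∫ x, u x ∂μ := by
    refine integral_congr_ae (Filter.Eventually.of_forall fun x => ?_)
    show ((u x) ^ (1-t)) ^ (1/(1-t)) = u x
    rw [← Real.rpow_mul (hu x), mul_one_div_cancel ht1'.ne', Real.rpow_one]
  rw [eL, e3, e4, one_div_one_div, one_div_one_div] at H
  exact H

end Helpers


/-- Let `φ, Ψ ∈ H^s(ℝ^d)` with `‖φ‖_{L²} = ‖Ψ‖_{L²} = 1`, `p = |φ⟩⟨φ|`,
`q = 1 - p`, `S = (1-Δ)^s`, and `a = ‖qΨ‖²`.  Then for `θ ∈ [0,1)`: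
`⟨Ψ, S^θ Ψ⟩ - ⟨φ, S^θ φ⟩ ≤ (‖S^{1/2}Ψ‖ + ‖S^{1/2}φ‖) ·
  max(1, (‖S^{1/2}Ψ‖+‖S^{1/2}φ‖)^{2θ-1}) · a^{min(1/2, 1-θ)}`.

Working on the Fourier side (Plancherel), `Ψ` and `φ` are represented by their Fourier
transforms `F = 𝓕Ψ`, `G = 𝓕φ`, unit vectors of `L²(ℝ^d)`; `S^r` acts as multiplication
by `w(ξ)^r` with `w(ξ) = (1+|ξ|²)^s`, so `⟨Ψ, S^θΨ⟩ = ∫ w^θ |F|²`,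
`‖S^{1/2}Ψ‖² = ∫ w |F|²`, and `a = ‖qΨ‖² = ∫ |F - ⟨G,F⟩G|²`.  The hypothesis
`φ, Ψ ∈ H^s` is the integrability of `w|F|²` and `w|G|²`. -/
theorem stmt_5 (d : ℕ) (s : ℝ) (hs : 0 < s) (θ : ℝ) (hθ0 : 0 ≤ θ) (hθ1 : θ < 1)
    (F G : EuclideanSpace ℝ (Fin d) → ℂ)
    (hF2 : MemLp F 2 (volume : Measure (EuclideanSpace ℝ (Fin d))))
    (hG2 : MemLp G 2 (volume : Measure (EuclideanSpace ℝ (Fin d))))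
    (hFnorm : eLpNorm F 2 volume = 1) (hGnorm : eLpNorm G 2 volume = 1)
    (hFs : Integrable (fun ξ => (1 + ‖ξ‖ ^ 2) ^ s * ‖F ξ‖ ^ 2) volume)
    (hGs : Integrable (fun ξ => (1 + ‖ξ‖ ^ 2) ^ s * ‖G ξ‖ ^ 2) volume)
    (a M : ℝ)
    (ha : a = ∫ ξ, ‖F ξ - (∫ η, (starRingEnd ℂ) (G η) * F η) * G ξ‖ ^ 2)
    (hM : M = Real.sqrt (∫ ξ, (1 + ‖ξ‖ ^ 2) ^ s * ‖F ξ‖ ^ 2)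
      + Real.sqrt (∫ ξ, (1 + ‖ξ‖ ^ 2) ^ s * ‖G ξ‖ ^ 2)) :
    (∫ ξ, (1 + ‖ξ‖ ^ 2) ^ (θ * s) * ‖F ξ‖ ^ 2) - (∫ ξ, (1 + ‖ξ‖ ^ 2) ^ (θ * s) * ‖G ξ‖ ^ 2)
      ≤ M * max 1 (M ^ (2 * θ - 1)) * a ^ min (1/2 : ℝ) (1 - θ) := by
  classical
  -- base facts
  have hb1 : ∀ ξ : EuclideanSpace ℝ (Fin d), (1:ℝ) ≤ 1 + ‖ξ‖ ^ 2 := fun ξ => by nlinarith [sq_nonneg ‖ξ‖]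
  have hb0 : ∀ ξ : EuclideanSpace ℝ (Fin d), (0:ℝ) < 1 + ‖ξ‖ ^ 2 := fun ξ => lt_of_lt_of_le one_pos (hb1 ξ)
  have hcont : ∀ e : ℝ, Continuous (fun ξ : EuclideanSpace ℝ (Fin d) => (1 + ‖ξ‖ ^ 2) ^ e) := fun e =>
    (continuous_const.add ((continuous_norm).pow 2)).rpow_const (fun ξ => Or.inl (hb0 ξ).ne')
  set c : ℂ := ∫ η, (starRingEnd ℂ) (G η) * F η with hc_def
  set Q : EuclideanSpace ℝ (Fin d) → ℂ := fun ξ => F ξ - c * G ξ with hQ_def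
  have hQ2 : MemLp Q 2 (volume : Measure (EuclideanSpace ℝ (Fin d))) :=
    MemLp.ae_eq (Filter.Eventually.of_forall fun ξ => by simp [hQ_def, Pi.sub_apply])
      (hF2.sub (hG2.const_mul c))
  have ha' : a = ∫ ξ, ‖Q ξ‖ ^ 2 := ha
  have ha0 : 0 ≤ a := by
    rw [ha']; exact integral_nonneg fun ξ => by positivity
  have hM0 : 0 ≤ M := by
    rw [hM]; positivity
  -- unit L² norms
  have nF : ∫ ξ, ‖F ξ‖ ^ 2 = 1 := by
    have h := toReal_eLpNorm_two hF2
    rw [hFnorm] at h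
    simp only [ENNReal.toReal_one] at h
    exact Real.sqrt_eq_one.1 h.symm
  have nG : ∫ ξ, ‖G ξ‖ ^ 2 = 1 := by
    have h := toReal_eLpNorm_two hG2
    rw [hGnorm] at h
    simp only [ENNReal.toReal_one] at h
    exact Real.sqrt_eq_one.1 h.symm
  -- |c| ≤ 1
  have hc1 : ‖c‖ ≤ 1 := by
    have hint : Integrable (fun η => (starRingEnd ℂ) (G η) * F η) volume := by
      refine (my_int_mul hG2.norm hF2.norm).mono' ?_ ?_
      · exact ((continuous_star.comp_aestronglyMeasurable hG2.1).mul hF2.1)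
      · filter_upwards with x
        simp [norm_mul, RCLike.norm_conj]
    have h1 : ‖c‖ ≤ ∫ η, ‖G η‖ * ‖F η‖ := by
      rw [hc_def]
      refine (norm_integral_le_integral_norm _).trans_eq ?_
      refine integral_congr_ae (Filter.Eventually.of_forall fun x => ?_)
      simp [norm_mul, RCLike.norm_conj]
    have h2 := my_cauchy hG2.norm hF2.norm (fun x => norm_nonneg _) (fun x => norm_nonneg _)
    rw [nF, nG] at h2
    simpa using h1.trans h2
  have hQle : ∀ ξ, ‖Q ξ‖ ≤ ‖F ξ‖ + ‖G ξ‖ := by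
    intro ξ
    refine (norm_sub_le _ _).trans ?_
    have : ‖c * G ξ‖ ≤ ‖G ξ‖ := by
      rw [norm_mul]
      nlinarith [norm_nonneg (G ξ), norm_nonneg c]
    linarith
  -- dominating function
  have hD : Integrable (fun ξ : EuclideanSpace ℝ (Fin d) => 2 * ((1 + ‖ξ‖ ^ 2) ^ s * ‖F ξ‖ ^ 2)
      + 2 * ((1 + ‖ξ‖ ^ 2) ^ s * ‖G ξ‖ ^ 2)) volume := (hFs.const_mul 2).add (hGs.const_mul 2)
  have hDle : ∀ ξ : EuclideanSpace ℝ (Fin d), (1 + ‖ξ‖ ^ 2) ^ s * (‖F ξ‖ + ‖G ξ‖) ^ 2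
      ≤ 2 * ((1 + ‖ξ‖ ^ 2) ^ s * ‖F ξ‖ ^ 2) + 2 * ((1 + ‖ξ‖ ^ 2) ^ s * ‖G ξ‖ ^ 2) := by
    intro ξ
    have hw0 : (0:ℝ) ≤ (1 + ‖ξ‖ ^ 2) ^ s := Real.rpow_nonneg (hb0 ξ).le s
    nlinarith [sq_nonneg (‖F ξ‖ - ‖G ξ‖), hw0]
  -- θ-weighted integrability
  have hwθ_le : ∀ ξ : EuclideanSpace ℝ (Fin d), (1 + ‖ξ‖ ^ 2) ^ (θ * s) ≤ (1 + ‖ξ‖ ^ 2) ^ s := fun ξ =>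
    Real.rpow_le_rpow_of_exponent_le (hb1 ξ) (by nlinarith)
  have hwθ0 : ∀ ξ : EuclideanSpace ℝ (Fin d), (0:ℝ) ≤ (1 + ‖ξ‖ ^ 2) ^ (θ * s) := fun ξ =>
    Real.rpow_nonneg (hb0 ξ).le _
  have mF2 : AEStronglyMeasurable (fun ξ : EuclideanSpace ℝ (Fin d) => ‖F ξ‖ ^ 2) volume :=
    (continuous_pow 2).comp_aestronglyMeasurable hF2.1.norm
  have mG2 : AEStronglyMeasurable (fun ξ : EuclideanSpace ℝ (Fin d) => ‖G ξ‖ ^ 2) volume :=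
    (continuous_pow 2).comp_aestronglyMeasurable hG2.1.norm
  have hIθF : Integrable (fun ξ : EuclideanSpace ℝ (Fin d) => (1 + ‖ξ‖ ^ 2) ^ (θ * s) * ‖F ξ‖ ^ 2) volume := by
    refine hFs.mono' ((hcont (θ*s)).aestronglyMeasurable.mul mF2) ?_
    filter_upwards with ξ
    rw [Real.norm_of_nonneg (by positivity)]
    exact mul_le_mul_of_nonneg_right (hwθ_le ξ) (sq_nonneg _)
  have hIθG : Integrable (fun ξ : EuclideanSpace ℝ (Fin d) => (1 + ‖ξ‖ ^ 2) ^ (θ * s) * ‖G ξ‖ ^ 2) volume := by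
    refine hGs.mono' ((hcont (θ*s)).aestronglyMeasurable.mul mG2) ?_
    filter_upwards with ξ
    rw [Real.norm_of_nonneg (by positivity)]
    exact mul_le_mul_of_nonneg_right (hwθ_le ξ) (sq_nonneg _)
  -- more measurability
  have mQ : AEStronglyMeasurable (fun ξ : EuclideanSpace ℝ (Fin d) => ‖Q ξ‖) volume := hQ2.1.norm
  have mQ2 : AEStronglyMeasurable (fun ξ : EuclideanSpace ℝ (Fin d) => ‖Q ξ‖ ^ 2) volume :=
    (continuous_pow 2).comp_aestronglyMeasurable mQ
  have mFG : AEStronglyMeasurable (fun ξ : EuclideanSpace ℝ (Fin d) => ‖F ξ‖ + ‖G ξ‖) volume :=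
    hF2.1.norm.add hG2.1.norm
  have hIQw : Integrable (fun ξ : EuclideanSpace ℝ (Fin d) =>
      (1 + ‖ξ‖ ^ 2) ^ s * ‖Q ξ‖ ^ 2) volume := by
    refine hD.mono' ((hcont s).aestronglyMeasurable.mul mQ2) ?_
    filter_upwards with ξ
    rw [Real.norm_of_nonneg (by positivity)]
    refine le_trans ?_ (hDle ξ)
    have h1 : ‖Q ξ‖ ^ 2 ≤ (‖F ξ‖ + ‖G ξ‖) ^ 2 := by nlinarith [hQle ξ, norm_nonneg (Q ξ)]
    exact mul_le_mul_of_nonneg_left h1 (Real.rpow_nonneg (hb0 ξ).le s)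
  have hIcross : Integrable (fun ξ : EuclideanSpace ℝ (Fin d) =>
      (1 + ‖ξ‖ ^ 2) ^ (θ * s) * (‖Q ξ‖ * (‖F ξ‖ + ‖G ξ‖))) volume := by
    refine hD.mono' ((hcont (θ*s)).aestronglyMeasurable.mul (mQ.mul mFG)) ?_
    filter_upwards with ξ
    rw [Real.norm_of_nonneg (by positivity)]
    refine le_trans ?_ (hDle ξ)
    have h1 : ‖Q ξ‖ * (‖F ξ‖ + ‖G ξ‖) ≤ (‖F ξ‖ + ‖G ξ‖) ^ 2 := by
      nlinarith [hQle ξ, norm_nonneg (Q ξ), norm_nonneg (F ξ), norm_nonneg (G ξ)]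
    exact mul_le_mul (hwθ_le ξ) h1 (by positivity) (Real.rpow_nonneg (hb0 ξ).le s)
  -- step 1 : difference bounded by cross term
  have step1 : (∫ ξ, (1 + ‖ξ‖ ^ 2) ^ (θ * s) * ‖F ξ‖ ^ 2)
      - (∫ ξ, (1 + ‖ξ‖ ^ 2) ^ (θ * s) * ‖G ξ‖ ^ 2)
      ≤ ∫ ξ, (1 + ‖ξ‖ ^ 2) ^ (θ * s) * (‖Q ξ‖ * (‖F ξ‖ + ‖G ξ‖)) := by
    have hTg0 : 0 ≤ ∫ ξ, (1 + ‖ξ‖ ^ 2) ^ (θ * s) * ‖G ξ‖ ^ 2 :=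
      integral_nonneg fun ξ => by positivity
    have h2 : (∫ ξ, (1 + ‖ξ‖ ^ 2) ^ (θ * s) * ‖F ξ‖ ^ 2)
        - ‖c‖ ^ 2 * (∫ ξ, (1 + ‖ξ‖ ^ 2) ^ (θ * s) * ‖G ξ‖ ^ 2)
        = ∫ ξ, ((1 + ‖ξ‖ ^ 2) ^ (θ * s) * ‖F ξ‖ ^ 2
          - ‖c‖ ^ 2 * ((1 + ‖ξ‖ ^ 2) ^ (θ * s) * ‖G ξ‖ ^ 2)) := by
      rw [integral_sub hIθF (hIθG.const_mul _), integral_const_mul]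
    have h3 : ∫ ξ, ((1 + ‖ξ‖ ^ 2) ^ (θ * s) * ‖F ξ‖ ^ 2
          - ‖c‖ ^ 2 * ((1 + ‖ξ‖ ^ 2) ^ (θ * s) * ‖G ξ‖ ^ 2))
        ≤ ∫ ξ, (1 + ‖ξ‖ ^ 2) ^ (θ * s) * (‖Q ξ‖ * (‖F ξ‖ + ‖G ξ‖)) := by
      refine integral_mono (hIθF.sub (hIθG.const_mul _)) hIcross fun ξ => ?_
      have hxq : ‖F ξ‖ - ‖c‖ * ‖G ξ‖ ≤ ‖Q ξ‖ := by
        have h := norm_sub_norm_le (F ξ) (c * G ξ)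
        rw [norm_mul] at h
        exact h
      have h4 : ‖F ξ‖ ^ 2 - ‖c‖ ^ 2 * ‖G ξ‖ ^ 2 ≤ ‖Q ξ‖ * (‖F ξ‖ + ‖G ξ‖) := by
        nlinarith [mul_le_mul_of_nonneg_right hxq
            (show (0:ℝ) ≤ ‖F ξ‖ + ‖c‖ * ‖G ξ‖ by positivity),
          mul_le_mul_of_nonneg_left hc1 (mul_nonneg (norm_nonneg (Q ξ)) (norm_nonneg (G ξ)))]
      have h5 := mul_le_mul_of_nonneg_left h4 (hwθ0 ξ)
      show (1 + ‖ξ‖ ^ 2) ^ (θ * s) * ‖F ξ‖ ^ 2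
          - ‖c‖ ^ 2 * ((1 + ‖ξ‖ ^ 2) ^ (θ * s) * ‖G ξ‖ ^ 2)
        ≤ (1 + ‖ξ‖ ^ 2) ^ (θ * s) * (‖Q ξ‖ * (‖F ξ‖ + ‖G ξ‖))
      nlinarith [h5]
    have hcc : ‖c‖ ^ 2 ≤ 1 := by nlinarith [hc1, norm_nonneg c]
    have hcc' := mul_le_mul_of_nonneg_right hcc hTg0
    linarith [h2, h3, hcc']
  -- the weighted L² function r·(|F|+|G|)
  have hre : ∀ ξ : EuclideanSpace ℝ (Fin d),
      ((1 + ‖ξ‖ ^ 2) ^ (s/2)) ^ 2 = (1 + ‖ξ‖ ^ 2) ^ s := by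
    intro ξ
    rw [← Real.rpow_natCast ((1 + ‖ξ‖ ^ 2) ^ (s/2)) 2, ← Real.rpow_mul (hb0 ξ).le]
    norm_num
  have mrFG : AEStronglyMeasurable (fun ξ : EuclideanSpace ℝ (Fin d) =>
      (1 + ‖ξ‖ ^ 2) ^ (s/2) * (‖F ξ‖ + ‖G ξ‖)) volume := by
    exact ((hcont (s/2)).aestronglyMeasurable).mul mFG
  have hr2 : MemLp (fun ξ : EuclideanSpace ℝ (Fin d) =>
      (1 + ‖ξ‖ ^ 2) ^ (s/2) * (‖F ξ‖ + ‖G ξ‖)) 2 volume := by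
    refine (memLp_two_iff_integrable_sq mrFG).2 ?_
    refine hD.mono' ((continuous_pow 2).comp_aestronglyMeasurable mrFG) ?_
    filter_upwards with ξ
    rw [Real.norm_of_nonneg (by positivity), mul_pow, hre ξ]
    exact hDle ξ
  have hK : Real.sqrt (∫ ξ, ((1 + ‖ξ‖ ^ 2) ^ (s/2) * (‖F ξ‖ + ‖G ξ‖)) ^ 2) ≤ M := by
    have hrF : MemLp (fun ξ : EuclideanSpace ℝ (Fin d) =>
        (1 + ‖ξ‖ ^ 2) ^ (s/2) * ‖F ξ‖) 2 volume := by
      have mm : AEStronglyMeasurable (fun ξ : EuclideanSpace ℝ (Fin d) =>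
          (1 + ‖ξ‖ ^ 2) ^ (s/2) * ‖F ξ‖) volume := by
        exact ((hcont (s/2)).aestronglyMeasurable).mul hF2.1.norm
      refine (memLp_two_iff_integrable_sq mm).2 ?_
      refine hFs.congr (Filter.Eventually.of_forall fun ξ => ?_)
      simp only [mul_pow, hre ξ]
    have hrG : MemLp (fun ξ : EuclideanSpace ℝ (Fin d) =>
        (1 + ‖ξ‖ ^ 2) ^ (s/2) * ‖G ξ‖) 2 volume := by
      have mm : AEStronglyMeasurable (fun ξ : EuclideanSpace ℝ (Fin d) =>
          (1 + ‖ξ‖ ^ 2) ^ (s/2) * ‖G ξ‖) volume := by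
        exact ((hcont (s/2)).aestronglyMeasurable).mul hG2.1.norm
      refine (memLp_two_iff_integrable_sq mm).2 ?_
      refine hGs.congr (Filter.Eventually.of_forall fun ξ => ?_)
      simp only [mul_pow, hre ξ]
    have hmink := my_minkowski hrF hrG (fun ξ => by positivity) (fun ξ => by positivity)
    have e1 : ∫ ξ, ((1 + ‖ξ‖ ^ 2) ^ (s/2) * ‖F ξ‖ + (1 + ‖ξ‖ ^ 2) ^ (s/2) * ‖G ξ‖) ^ 2
        = ∫ ξ, ((1 + ‖ξ‖ ^ 2) ^ (s/2) * (‖F ξ‖ + ‖G ξ‖)) ^ 2 := by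
      refine integral_congr_ae (Filter.Eventually.of_forall fun ξ => ?_)
      ring
    have e2 : ∫ ξ, ((1 + ‖ξ‖ ^ 2) ^ (s/2) * ‖F ξ‖) ^ 2
        = ∫ ξ, (1 + ‖ξ‖ ^ 2) ^ s * ‖F ξ‖ ^ 2 := by
      refine integral_congr_ae (Filter.Eventually.of_forall fun ξ => ?_)
      simp only [mul_pow, hre ξ]
    have e3 : ∫ ξ, ((1 + ‖ξ‖ ^ 2) ^ (s/2) * ‖G ξ‖) ^ 2
        = ∫ ξ, (1 + ‖ξ‖ ^ 2) ^ s * ‖G ξ‖ ^ 2 := by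
      refine integral_congr_ae (Filter.Eventually.of_forall fun ξ => ?_)
      simp only [mul_pow, hre ξ]
    rw [e1, e2, e3] at hmink
    rw [hM]
    exact hmink
  have hw1 : ∀ ξ : EuclideanSpace ℝ (Fin d), (1:ℝ) ≤ (1 + ‖ξ‖ ^ 2) ^ s := fun ξ => by
    simpa using Real.rpow_le_rpow_of_exponent_le (hb1 ξ) (show (0:ℝ) ≤ s from hs.le)
  rcases le_or_gt θ (1/2) with hhalf | hhalf
  · -- Case θ ≤ 1/2
    have hmin : min (1/2 : ℝ) (1 - θ) = 1/2 := min_eq_left (by linarith)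
    have step2 : ∫ ξ, (1 + ‖ξ‖ ^ 2) ^ (θ * s) * (‖Q ξ‖ * (‖F ξ‖ + ‖G ξ‖))
        ≤ ∫ ξ, ((1 + ‖ξ‖ ^ 2) ^ (s/2) * (‖F ξ‖ + ‖G ξ‖)) * ‖Q ξ‖ := by
      refine integral_mono hIcross (my_int_mul hr2 hQ2.norm) fun ξ => ?_
      show (1 + ‖ξ‖ ^ 2) ^ (θ * s) * (‖Q ξ‖ * (‖F ξ‖ + ‖G ξ‖))
        ≤ ((1 + ‖ξ‖ ^ 2) ^ (s/2) * (‖F ξ‖ + ‖G ξ‖)) * ‖Q ξ‖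
      have hle : (1 + ‖ξ‖ ^ 2) ^ (θ * s) ≤ (1 + ‖ξ‖ ^ 2) ^ (s/2) :=
        Real.rpow_le_rpow_of_exponent_le (hb1 ξ) (by nlinarith)
      have h := mul_le_mul_of_nonneg_right hle
        (show (0:ℝ) ≤ ‖Q ξ‖ * (‖F ξ‖ + ‖G ξ‖) by positivity)
      nlinarith [h]
    have step3 := my_cauchy hr2 hQ2.norm (fun ξ => by positivity) (fun ξ => norm_nonneg _)
    have hQsqle : Real.sqrt (∫ ξ, ‖Q ξ‖ ^ 2) ≤ Real.sqrt a := le_of_eq (by rw [ha'])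
    rw [hmin]
    calc (∫ ξ, (1 + ‖ξ‖ ^ 2) ^ (θ * s) * ‖F ξ‖ ^ 2)
          - (∫ ξ, (1 + ‖ξ‖ ^ 2) ^ (θ * s) * ‖G ξ‖ ^ 2)
        ≤ ∫ ξ, (1 + ‖ξ‖ ^ 2) ^ (θ * s) * (‖Q ξ‖ * (‖F ξ‖ + ‖G ξ‖)) := step1
      _ ≤ ∫ ξ, ((1 + ‖ξ‖ ^ 2) ^ (s/2) * (‖F ξ‖ + ‖G ξ‖)) * ‖Q ξ‖ := step2
      _ ≤ Real.sqrt (∫ ξ, ((1 + ‖ξ‖ ^ 2) ^ (s/2) * (‖F ξ‖ + ‖G ξ‖)) ^ 2)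
          * Real.sqrt (∫ ξ, ‖Q ξ‖ ^ 2) := step3
      _ ≤ M * Real.sqrt a :=
          mul_le_mul hK hQsqle (Real.sqrt_nonneg _) hM0
      _ = M * a ^ ((1:ℝ)/2) := by rw [Real.sqrt_eq_rpow]
      _ ≤ M * max 1 (M ^ (2 * θ - 1)) * a ^ ((1:ℝ)/2) :=
          mul_le_mul_of_nonneg_right
            (le_mul_of_one_le_right hM0 (le_max_left _ _)) (Real.rpow_nonneg ha0 _)
  · -- Case θ > 1/2
    have hmin : min (1/2 : ℝ) (1 - θ) = 1 - θ := min_eq_right (by linarith)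
    have ht0 : 0 < 2*θ - 1 := by linarith
    have ht1 : 2*θ - 1 < 1 := by linarith
    have hve : ∀ ξ : EuclideanSpace ℝ (Fin d),
        ((1 + ‖ξ‖ ^ 2) ^ (θ*s - s/2)) ^ 2 = (1 + ‖ξ‖ ^ 2) ^ (s * (2*θ - 1)) := by
      intro ξ
      rw [← Real.rpow_natCast ((1 + ‖ξ‖ ^ 2) ^ (θ*s - s/2)) 2, ← Real.rpow_mul (hb0 ξ).le]
      congr 1
      push_cast
      ring
    have mvQ : AEStronglyMeasurable (fun ξ : EuclideanSpace ℝ (Fin d) =>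
        (1 + ‖ξ‖ ^ 2) ^ (θ*s - s/2) * ‖Q ξ‖) volume := by
      exact ((hcont _).aestronglyMeasurable).mul mQ
    have hvq2 : MemLp (fun ξ : EuclideanSpace ℝ (Fin d) =>
        (1 + ‖ξ‖ ^ 2) ^ (θ*s - s/2) * ‖Q ξ‖) 2 volume := by
      refine (memLp_two_iff_integrable_sq mvQ).2 ?_
      refine hIQw.mono' ((continuous_pow 2).comp_aestronglyMeasurable mvQ) ?_
      filter_upwards with ξ
      rw [Real.norm_of_nonneg (by positivity)]
      show ((1 + ‖ξ‖ ^ 2) ^ (θ*s - s/2) * ‖Q ξ‖) ^ 2 ≤ (1 + ‖ξ‖ ^ 2) ^ s * ‖Q ξ‖ ^ 2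
      rw [mul_pow, hve ξ]
      exact mul_le_mul_of_nonneg_right
        (Real.rpow_le_rpow_of_exponent_le (hb1 ξ) (by nlinarith)) (sq_nonneg _)
    have step2 : ∫ ξ, (1 + ‖ξ‖ ^ 2) ^ (θ * s) * (‖Q ξ‖ * (‖F ξ‖ + ‖G ξ‖))
        = ∫ ξ, ((1 + ‖ξ‖ ^ 2) ^ (s/2) * (‖F ξ‖ + ‖G ξ‖))
            * ((1 + ‖ξ‖ ^ 2) ^ (θ*s - s/2) * ‖Q ξ‖) := by
      refine integral_congr_ae (Filter.Eventually.of_forall fun ξ => ?_)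
      show (1 + ‖ξ‖ ^ 2) ^ (θ * s) * (‖Q ξ‖ * (‖F ξ‖ + ‖G ξ‖))
        = ((1 + ‖ξ‖ ^ 2) ^ (s/2) * (‖F ξ‖ + ‖G ξ‖))
            * ((1 + ‖ξ‖ ^ 2) ^ (θ*s - s/2) * ‖Q ξ‖)
      rw [show (1 + ‖ξ‖ ^ 2) ^ (θ * s)
          = (1 + ‖ξ‖ ^ 2) ^ (s/2) * (1 + ‖ξ‖ ^ 2) ^ (θ*s - s/2) by
        rw [← Real.rpow_add (hb0 ξ)]; congr 1; ring]
      ring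
    have step3 := my_cauchy hr2 hvq2 (fun ξ => by positivity) (fun ξ => by positivity)
    -- interpolation
    have hinterp : ∫ ξ, ((1 + ‖ξ‖ ^ 2) ^ (θ*s - s/2) * ‖Q ξ‖) ^ 2
        ≤ (∫ ξ, (1 + ‖ξ‖ ^ 2) ^ s * ‖Q ξ‖ ^ 2) ^ (2*θ - 1) * a ^ (1 - (2*θ - 1)) := by
      have hint := my_interp (μ := (volume : Measure (EuclideanSpace ℝ (Fin d))))
        (w := fun ξ : EuclideanSpace ℝ (Fin d) => (1 + ‖ξ‖ ^ 2) ^ s)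
        (u := fun ξ : EuclideanSpace ℝ (Fin d) => ‖Q ξ‖ ^ 2)
        hw1 (fun ξ => sq_nonneg _) (hcont s).aestronglyMeasurable mQ2
        hQ2.norm.integrable_sq hIQw ht0 ht1
      have e5 : ∫ ξ, ((1 + ‖ξ‖ ^ 2) ^ s) ^ (2*θ - 1) * ‖Q ξ‖ ^ 2
          = ∫ ξ, ((1 + ‖ξ‖ ^ 2) ^ (θ*s - s/2) * ‖Q ξ‖) ^ 2 := by
        refine integral_congr_ae (Filter.Eventually.of_forall fun ξ => ?_)
        show ((1 + ‖ξ‖ ^ 2) ^ s) ^ (2*θ - 1) * ‖Q ξ‖ ^ 2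
          = ((1 + ‖ξ‖ ^ 2) ^ (θ*s - s/2) * ‖Q ξ‖) ^ 2
        rw [mul_pow, hve ξ, ← Real.rpow_mul (hb0 ξ).le]
      have e6 : ∫ ξ, ‖Q ξ‖ ^ 2 = a := ha'.symm
      rw [e5, e6] at hint
      exact hint
    have hIbound : ∫ ξ, (1 + ‖ξ‖ ^ 2) ^ s * ‖Q ξ‖ ^ 2 ≤ M ^ 2 := by
      have i1 : ∫ ξ, (1 + ‖ξ‖ ^ 2) ^ s * ‖Q ξ‖ ^ 2
          ≤ ∫ ξ, ((1 + ‖ξ‖ ^ 2) ^ (s/2) * (‖F ξ‖ + ‖G ξ‖)) ^ 2 := by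
        refine integral_mono hIQw hr2.integrable_sq fun ξ => ?_
        show (1 + ‖ξ‖ ^ 2) ^ s * ‖Q ξ‖ ^ 2 ≤ ((1 + ‖ξ‖ ^ 2) ^ (s/2) * (‖F ξ‖ + ‖G ξ‖)) ^ 2
        rw [mul_pow, hre ξ]
        refine mul_le_mul_of_nonneg_left ?_ (Real.rpow_nonneg (hb0 ξ).le s)
        nlinarith [hQle ξ, norm_nonneg (Q ξ)]
      have h0 : 0 ≤ ∫ ξ, ((1 + ‖ξ‖ ^ 2) ^ (s/2) * (‖F ξ‖ + ‖G ξ‖)) ^ 2 :=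
        integral_nonneg fun ξ => sq_nonneg _
      nlinarith [Real.sq_sqrt h0, hK,
        Real.sqrt_nonneg (∫ ξ, ((1 + ‖ξ‖ ^ 2) ^ (s/2) * (‖F ξ‖ + ‖G ξ‖)) ^ 2), i1]
    have hI0 : 0 ≤ ∫ ξ, (1 + ‖ξ‖ ^ 2) ^ s * ‖Q ξ‖ ^ 2 :=
      integral_nonneg fun ξ => by positivity
    have hsq2 : Real.sqrt (∫ ξ, ((1 + ‖ξ‖ ^ 2) ^ (θ*s - s/2) * ‖Q ξ‖) ^ 2)
        ≤ M ^ (2*θ - 1) * a ^ (1 - θ) := by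
      have h1 : ∫ ξ, ((1 + ‖ξ‖ ^ 2) ^ (θ*s - s/2) * ‖Q ξ‖) ^ 2
          ≤ (M ^ 2) ^ (2*θ - 1) * a ^ (1 - (2*θ - 1)) :=
        hinterp.trans (mul_le_mul_of_nonneg_right
          (Real.rpow_le_rpow hI0 hIbound ht0.le) (Real.rpow_nonneg ha0 _))
      have h2 := Real.sqrt_le_sqrt h1
      refine h2.trans (le_of_eq ?_)
      have e7 : ((M:ℝ) ^ 2) ^ (2*θ - 1) = (M ^ (2*θ - 1)) ^ 2 := by
        rw [← Real.rpow_natCast M 2, ← Real.rpow_mul hM0,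
          ← Real.rpow_natCast (M ^ (2*θ - 1)) 2, ← Real.rpow_mul hM0]
        congr 1
        push_cast
        ring
      rw [Real.sqrt_mul (Real.rpow_nonneg (sq_nonneg M) _), e7,
        Real.sqrt_sq (Real.rpow_nonneg hM0 _), Real.sqrt_eq_rpow,
        ← Real.rpow_mul ha0]
      congr 1
      ring
    rw [hmin]
    calc (∫ ξ, (1 + ‖ξ‖ ^ 2) ^ (θ * s) * ‖F ξ‖ ^ 2)
          - (∫ ξ, (1 + ‖ξ‖ ^ 2) ^ (θ * s) * ‖G ξ‖ ^ 2)
        ≤ ∫ ξ, (1 + ‖ξ‖ ^ 2) ^ (θ * s) * (‖Q ξ‖ * (‖F ξ‖ + ‖G ξ‖)) := step1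
      _ = ∫ ξ, ((1 + ‖ξ‖ ^ 2) ^ (s/2) * (‖F ξ‖ + ‖G ξ‖))
            * ((1 + ‖ξ‖ ^ 2) ^ (θ*s - s/2) * ‖Q ξ‖) := step2
      _ ≤ Real.sqrt (∫ ξ, ((1 + ‖ξ‖ ^ 2) ^ (s/2) * (‖F ξ‖ + ‖G ξ‖)) ^ 2)
          * Real.sqrt (∫ ξ, ((1 + ‖ξ‖ ^ 2) ^ (θ*s - s/2) * ‖Q ξ‖) ^ 2) := step3
      _ ≤ M * (M ^ (2*θ - 1) * a ^ (1 - θ)) :=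
          mul_le_mul hK hsq2 (Real.sqrt_nonneg _) hM0
      _ = (M * M ^ (2*θ - 1)) * a ^ (1 - θ) := by ring
      _ ≤ M * max 1 (M ^ (2 * θ - 1)) * a ^ (1 - θ) :=
          mul_le_mul_of_nonneg_right
            (mul_le_mul_of_nonneg_left (le_max_right 1 _) hM0) (Real.rpow_nonneg ha0 _)
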